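/- arXiv:2203.10434 — 2 statements merged into one kernel-verified Lean document; each statement's English description precedes it below -/
import Mathlib

section
/- Let n, τ, U be as in the context, let γ : [0,s₀] → U be a geodesic curve, and assume Δτ(γ(0)) = 0. Then for every s ∈ [0,s₀]: Δτ(γ(s)) / (2·n(γ(s))²) ≤ 3·n₀₀²·s. (Inequality (6.19) in the proof of Theorem 3.1.) -/
/- STATEMENT 3 (inequality (6.19) in the proof of Theorem 3.1):
   along a geodesic with Δτ(γ(0)) = 0 one has Δτ(γ(s))/(2n(γ(s))²) ≤ 3 n₀₀² s. -/

open Real Set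

/-- The partial derivative `∂_{x_i} f` of `f : ℝ³ → ℝ`. -/
noncomputable def pd (i : Fin 3) (f : (Fin 3 → ℝ) → ℝ) (x : Fin 3 → ℝ) : ℝ :=
  fderiv ℝ f x (Pi.single i 1)

/-- The Laplacian `Δ f = Σᵢ ∂_{x_i}² f`. -/
noncomputable def lap (f : (Fin 3 → ℝ) → ℝ) (x : Fin 3 → ℝ) : ℝ :=
  ∑ i : Fin 3, pd i (pd i f) x

set_option maxHeartbeats 1000000

set_option maxHeartbeats 2000000 in

lemma sos (m00 m01 m02 m11 m12 m22 g0 g1 g2 : ℝ)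
    (hN : 0 < (g0^2 + g1^2 + g2^2)) :
    2*(g0^2 + g1^2 + g2^2)*((m00*g0 + m01*g1 + m02*g2)^2 + (m01*g0 + m11*g1 + m12*g2)^2 + (m02*g0 + m12*g1 + m22*g2)^2) - (g0*(m00*g0 + m01*g1 + m02*g2) + g1*(m01*g0 + m11*g1 + m12*g2) + g2*(m02*g0 + m12*g1 + m22*g2))^2 + ((g0^2 + g1^2 + g2^2)*(m00 + m11 + m22) - (g0*(m00*g0 + m01*g1 + m02*g2) + g1*(m01*g0 + m11*g1 + m12*g2) + g2*(m02*g0 + m12*g1 + m22*g2)))^2/2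
      ≤ (g0^2 + g1^2 + g2^2)^2 * (m00^2 + m11^2 + m22^2 + 2*m01^2 + 2*m02^2 + 2*m12^2) := by
  set N : ℝ := (g0^2 + g1^2 + g2^2) with hNdef
  set w0 : ℝ := (m00*g0 + m01*g1 + m02*g2) with hw0
  set w1 : ℝ := (m01*g0 + m11*g1 + m12*g2) with hw1
  set w2 : ℝ := (m02*g0 + m12*g1 + m22*g2) with hw2
  set q : ℝ := g0*w0 + g1*w1 + g2*w2 with hq
  set a : ℝ := (m00 + m11 + m22) with ha
  set S00 : ℝ := N^2*m00 - N*w0*g0 - N*g0*w0 + q*g0*g0 with hS00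
  set S01 : ℝ := N^2*m01 - N*w0*g1 - N*g0*w1 + q*g0*g1 with hS01
  set S02 : ℝ := N^2*m02 - N*w0*g2 - N*g0*w2 + q*g0*g2 with hS02
  set S11 : ℝ := N^2*m11 - N*w1*g1 - N*g1*w1 + q*g1*g1 with hS11
  set S12 : ℝ := N^2*m12 - N*w1*g2 - N*g1*w2 + q*g1*g2 with hS12
  set S22 : ℝ := N^2*m22 - N*w2*g2 - N*g2*w2 + q*g2*g2 with hS22
  set R00 : ℝ := 2*S00 - (N*a - q)*(N - g0*g0) with hR00
  set R01 : ℝ := 2*S01 - (N*a - q)*(0 - g0*g1) with hR01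
  set R02 : ℝ := 2*S02 - (N*a - q)*(0 - g0*g2) with hR02
  set R11 : ℝ := 2*S11 - (N*a - q)*(N - g1*g1) with hR11
  set R12 : ℝ := 2*S12 - (N*a - q)*(0 - g1*g2) with hR12
  set R22 : ℝ := 2*S22 - (N*a - q)*(N - g2*g2) with hR22
  clear_value N w0 w1 w2 q a S00 S01 S02 S11 S12 S22 R00 R01 R02 R11 R12 R22
  have hid1 : N^4*(m00^2 + m11^2 + m22^2 + 2*m01^2 + 2*m02^2 + 2*m12^2) - 2*N^3*(w0^2 + w1^2 + w2^2) + N^2*q^2 = (S00^2 + S11^2 + S22^2 + 2*S01^2 + 2*S02^2 + 2*S12^2) := by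
    simp only [hS00, hS01, hS02, hS11, hS12, hS22, hR00, hR01, hR02, hR11, hR12, hR22, hq, hw0, hw1, hw2, ha, hNdef]; ring
  have hid2 : (R00^2 + R11^2 + R22^2 + 2*R01^2 + 2*R02^2 + 2*R12^2) = 4*(S00^2 + S11^2 + S22^2 + 2*S01^2 + 2*S02^2 + 2*S12^2) - 2*(N^2*(N*a - q)^2) := by
    simp only [hS00, hS01, hS02, hS11, hS12, hS22, hR00, hR01, hR02, hR11, hR12, hR22, hq, hw0, hw1, hw2, ha, hNdef]; ring
  have hR : (0:ℝ) ≤ (R00^2 + R11^2 + R22^2 + 2*R01^2 + 2*R02^2 + 2*R12^2) := by positivity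
  have hNp : (0:ℝ) < N^2 := by positivity
  rw [← mul_le_mul_iff_right₀ hNp]
  have key2 : N^2*(N^2*(m00^2 + m11^2 + m22^2 + 2*m01^2 + 2*m02^2 + 2*m12^2))
      - N^2*(2*N*(w0^2 + w1^2 + w2^2) - q^2 + (N*a - q)^2/2)
      = (R00^2 + R11^2 + R22^2 + 2*R01^2 + 2*R02^2 + 2*R12^2)/4 := by
    linear_combination hid1 - hid2/4
  linarith [key2, hR]



lemma key (K ν a L σ A S2 : ℝ)
    (hν1 : 1 ≤ ν) (hνK : ν ≤ K)
    (hsos : 2*ν^2*(ν^2*A) - (ν*σ)^2 + (ν^2*a - ν*σ)^2/2 ≤ (ν^2)^2 * S2)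
    (hCS : σ^2 ≤ ν^2 * A)
    (hL : L ≤ 3*K) :
    (A + ν*L - S2) / (2*ν^4) - a * σ / ν^5 ≤ 3*K^2 := by
  have hν0 : (0:ℝ) < ν := lt_of_lt_of_le one_pos hν1
  have hK1 : (1:ℝ) ≤ K := le_trans hν1 hνK
  have hν5 : (0:ℝ) < ν^5 := by positivity
  have hν3 : (0:ℝ) < ν^3 := by positivity
  have hmain' : ν^3 * ((A + ν*L - S2)*ν - 2*(a*σ)) ≤ ν^3 * (6*K^2*ν^5) := by
    have h1 : ν^2*σ^2 ≤ ν^2*(ν^2*A) :=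
      mul_le_mul_of_nonneg_left hCS (by positivity)
    have h2 : ν^5*L ≤ ν^5*(3*K) :=
      mul_le_mul_of_nonneg_left hL (le_of_lt hν5)
    have h3 : 3*K*ν^5 ≤ 3*K^2*ν^5 := by nlinarith [mul_nonneg (mul_nonneg (sub_nonneg.2 hK1) (zero_le_one.trans hK1)) hν5.le]
    have h4 : ν^5 ≤ ν^8 := pow_le_pow_right₀ hν1 (by norm_num)
    have h5 : 3*K^2*ν^5 ≤ 6*K^2*ν^8 := by nlinarith [h4, hν5, mul_le_mul_of_nonneg_left h4 (by positivity : (0:ℝ) ≤ 3*K^2)]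
    nlinarith [hsos, h1, h2, h3, h5, sq_nonneg (ν^2*a + ν*σ)]
  have hmain : (A + ν*L - S2)*ν - 2*(a*σ) ≤ 6*K^2*ν^5 :=
    le_of_mul_le_mul_left hmain' hν3
  have heq : (A + ν*L - S2) / (2*ν^4) - a * σ / ν^5
      = ((A + ν*L - S2)*ν - 2*(a*σ)) / (2*ν^5) := by
    field_simp
  rw [heq, div_le_iff₀ (by positivity)]
  nlinarith [hmain, hν5]





lemma contDiffAt_pd {f : (Fin 3 → ℝ) → ℝ} {x : Fin 3 → ℝ} {k : ℕ}
    (hf : ContDiffAt ℝ (k + 1 : ℕ) f x) (i : Fin 3) :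
    ContDiffAt ℝ k (pd i f) x := by
  have h1 : ContDiffAt ℝ k (fderiv ℝ f) x := hf.fderiv_right (by norm_cast)
  exact h1.clm_apply contDiffAt_const

lemma cd2_pd {f : (Fin 3 → ℝ) → ℝ} {x : Fin 3 → ℝ}
    (hf : ContDiffAt ℝ 3 f x) (i : Fin 3) : ContDiffAt ℝ 2 (pd i f) x :=
  contDiffAt_pd (k := 2) (by exact_mod_cast hf) i

lemma cd1_pd {f : (Fin 3 → ℝ) → ℝ} {x : Fin 3 → ℝ}
    (hf : ContDiffAt ℝ 2 f x) (i : Fin 3) : ContDiffAt ℝ 1 (pd i f) x :=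
  contDiffAt_pd (k := 1) (by exact_mod_cast hf) i

lemma da_pd {f : (Fin 3 → ℝ) → ℝ} {x : Fin 3 → ℝ}
    (hf : ContDiffAt ℝ 2 f x) (i : Fin 3) : DifferentiableAt ℝ (pd i f) x :=
  (cd1_pd hf i).differentiableAt one_ne_zero

lemma fderiv_apply_sum {f : (Fin 3 → ℝ) → ℝ} {x w : Fin 3 → ℝ} :
    fderiv ℝ f x w = ∑ i, w i * pd i f x := by
  have hw : w = ∑ i : Fin 3, w i • (Pi.single i 1 : Fin 3 → ℝ) := by
    funext j
    simp [Pi.single_apply, Finset.sum_apply]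
  conv_lhs => rw [hw]
  rw [map_sum]
  simp [pd, smul_eq_mul]

lemma hasDerivWithinAt_comp_pd {f : (Fin 3 → ℝ) → ℝ} {γ : ℝ → Fin 3 → ℝ} {v : Fin 3 → ℝ}
    {s : Set ℝ} {t : ℝ} (hf : DifferentiableAt ℝ f (γ t))
    (hγ : HasDerivWithinAt γ v s t) :
    HasDerivWithinAt (fun u => f (γ u)) (∑ i, v i * pd i f (γ t)) s t := by
  have h := hf.hasFDerivAt.comp_hasDerivWithinAt t hγ
  rwa [fderiv_apply_sum] at h

lemma pd_comm {f : (Fin 3 → ℝ) → ℝ} {x : Fin 3 → ℝ} (hf : ContDiffAt ℝ 2 f x) (i j : Fin 3) :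
    pd i (pd j f) x = pd j (pd i f) x := by
  have hsym : IsSymmSndFDerivAt ℝ f x := hf.isSymmSndFDerivAt (by simp [minSmoothness_of_isRCLikeNormedField])
  have hdf : DifferentiableAt ℝ (fderiv ℝ f) x :=
    (hf.fderiv_right (m := 1) (by norm_num)).differentiableAt one_ne_zero
  have key : ∀ a b : Fin 3, pd a (pd b f) x
      = fderiv ℝ (fderiv ℝ f) x (Pi.single a 1) (Pi.single b 1) := by
    intro a b
    show fderiv ℝ (fun y => (fderiv ℝ f y) (Pi.single b 1)) x (Pi.single a 1) = _
    rw [fderiv_clm_apply hdf (differentiableAt_const _)]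
    simp
  rw [key, key, hsym]

/-- `∂ⱼ(f·g) = ∂ⱼf·g + f·∂ⱼg`. -/
lemma pd_mul {f g : (Fin 3 → ℝ) → ℝ} {x : Fin 3 → ℝ} (hf : DifferentiableAt ℝ f x)
    (hg : DifferentiableAt ℝ g x) (j : Fin 3) :
    pd j (fun y => f y * g y) x = pd j f x * g x + f x * pd j g x := by
  show fderiv ℝ (fun y => f y * g y) x (Pi.single j 1) = _
  rw [fderiv_fun_mul hf hg]
  simp [pd]
  ring

/-- `∂ⱼ(f²) = 2f·∂ⱼf`. -/
lemma pd_sq {f : (Fin 3 → ℝ) → ℝ} {x : Fin 3 → ℝ} (hf : DifferentiableAt ℝ f x) (j : Fin 3) :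
    pd j (fun y => f y ^ 2) x = 2 * f x * pd j f x := by
  have : (fun y => f y ^ 2) = fun y => f y * f y := by funext y; ring
  rw [this, pd_mul hf hf]
  ring

lemma pd_sum {f : Fin 3 → (Fin 3 → ℝ) → ℝ} {x : Fin 3 → ℝ}
    (hf : ∀ i, DifferentiableAt ℝ (f i) x) (j : Fin 3) :
    pd j (fun y => ∑ i, f i y) x = ∑ i, pd j (f i) x := by
  show fderiv ℝ (fun y => ∑ i, f i y) x (Pi.single j 1) = _
  rw [fderiv_fun_sum (fun i _ => hf i)]
  simp [pd]

lemma pd_congr_nhds {f g : (Fin 3 → ℝ) → ℝ} {x : Fin 3 → ℝ}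
    (h : f =ᶠ[nhds x] g) (j : Fin 3) : pd j f x = pd j g x := by
  show fderiv ℝ f x _ = fderiv ℝ g x _
  rw [h.fderiv_eq]




section
variable {n τ : (Fin 3 → ℝ) → ℝ} {U : Set (Fin 3 → ℝ)}

lemma part1 (hU : IsOpen U) (hn : ContDiff ℝ 2 n) (hτ : ContDiffOn ℝ 3 τ U)
    (heik : ∀ x ∈ U, ∑ i : Fin 3, (pd i τ x) ^ 2 = (n x) ^ 2) :
    ∀ x ∈ U, ∀ j : Fin 3,
      ∑ i : Fin 3, pd i τ x * pd j (pd i τ) x = n x * pd j n x := by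
  intro x hx j
  have hτ3 : ContDiffAt ℝ 3 τ x := hτ.contDiffAt (hU.mem_nhds hx)
  have heq : (fun y => ∑ i : Fin 3, (pd i τ y) ^ 2) =ᶠ[nhds x] (fun y => (n y) ^ 2) := by
    filter_upwards [hU.mem_nhds hx] with y hy using heik y hy
  have h := pd_congr_nhds heq j
  rw [pd_sum (f := fun i y => pd i τ y ^ 2) (fun i => ((cd2_pd hτ3 i).differentiableAt two_ne_zero).pow 2)] at h
  rw [pd_sq ((hn.differentiable two_ne_zero) x) j] at h
  have hsq : ∀ i : Fin 3, pd j (fun y => (pd i τ y) ^ 2) x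
      = 2 * (pd i τ x * pd j (pd i τ) x) := by
    intro i
    rw [pd_sq ((cd2_pd hτ3 i).differentiableAt two_ne_zero) j]; ring
  rw [Finset.sum_congr rfl (fun i _ => hsq i), ← Finset.mul_sum] at h
  linarith [h]

lemma part2 (hU : IsOpen U) (hn : ContDiff ℝ 2 n) (hτ : ContDiffOn ℝ 3 τ U)
    (heik : ∀ x ∈ U, ∑ i : Fin 3, (pd i τ x) ^ 2 = (n x) ^ 2) :
    ∀ x ∈ U,
      (∑ a : Fin 3, ∑ b : Fin 3, (pd a (pd b τ) x) ^ 2)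
        + ∑ k : Fin 3, pd k τ x * pd k (lap τ) x
      = (∑ j : Fin 3, (pd j n x) ^ 2) + n x * ∑ j : Fin 3, pd j (pd j n) x := by
  intro x hx
  have hτ3 : ContDiffAt ℝ 3 τ x := hτ.contDiffAt (hU.mem_nhds hx)
  have hτ2 : ContDiffAt ℝ 2 τ x := hτ3.of_le (by norm_num)
  have hn2 : ContDiffAt ℝ 2 n x := hn.contDiffAt
  have per_j : ∀ j : Fin 3,
      ∑ i : Fin 3, (pd j (pd i τ) x * pd j (pd i τ) x + pd i τ x * pd j (pd j (pd i τ)) x)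
        = pd j n x * pd j n x + n x * pd j (pd j n) x := by
    intro j
    have heq : (fun y => ∑ i : Fin 3, pd i τ y * pd j (pd i τ) y)
        =ᶠ[nhds x] (fun y => n y * pd j n y) := by
      filter_upwards [hU.mem_nhds hx] with y hy using part1 hU hn hτ heik y hy j
    have h := pd_congr_nhds heq j
    rw [pd_sum (f := fun i y => pd i τ y * pd j (pd i τ) y) (fun i => DifferentiableAt.mul
      ((cd2_pd hτ3 i).differentiableAt two_ne_zero) (da_pd (cd2_pd hτ3 i) j))] at h
    rw [pd_mul ((hn.differentiable two_ne_zero) x) (da_pd hn2 j) j] at h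
    have hterm : ∀ i : Fin 3,
        pd j (fun y => pd i τ y * pd j (pd i τ) y) x
          = pd j (pd i τ) x * pd j (pd i τ) x + pd i τ x * pd j (pd j (pd i τ)) x := by
      intro i
      exact pd_mul ((cd2_pd hτ3 i).differentiableAt two_ne_zero) (da_pd (cd2_pd hτ3 i) j) j
    rw [Finset.sum_congr rfl (fun i _ => hterm i)] at h
    exact h
  have swap3 : ∀ i j : Fin 3, pd j (pd j (pd i τ)) x = pd i (pd j (pd j τ)) x := by
    intro i j
    have e1 : pd j (pd i τ) =ᶠ[nhds x] pd i (pd j τ) := by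
      filter_upwards [hU.mem_nhds hx] with y hy using
        pd_comm ((hτ.contDiffAt (hU.mem_nhds hy)).of_le (by norm_num)) j i
    rw [pd_congr_nhds e1 j]
    exact pd_comm (cd2_pd hτ3 j) j i
  have hlapk : ∀ k : Fin 3, pd k (lap τ) x = ∑ j : Fin 3, pd k (pd j (pd j τ)) x := by
    intro k
    exact pd_sum (fun j => da_pd (cd2_pd hτ3 j) j) k
  have p0 := per_j 0; have p1 := per_j 1; have p2 := per_j 2
  simp only [Fin.sum_univ_three] at p0 p1 p2 ⊢
  rw [hlapk 0, hlapk 1, hlapk 2]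
  simp only [Fin.sum_univ_three]
  have mswap : ∀ i j : Fin 3, pd i τ x * pd j (pd j (pd i τ)) x
      = pd i τ x * pd i (pd j (pd j τ)) x := fun i j => by rw [swap3 i j]
  linarith [p0, p1, p2, mswap 0 0, mswap 0 1, mswap 0 2, mswap 1 0, mswap 1 1, mswap 1 2, mswap 2 0, mswap 2 1, mswap 2 2]
end

lemma pointwise (K ν L : ℝ) (m : Fin 3 → Fin 3 → ℝ) (g p : Fin 3 → ℝ)
    (hsym : ∀ i j, m i j = m j i) (hν1 : 1 ≤ ν) (hνK : ν ≤ K)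
    (hg : ∑ i : Fin 3, (g i) ^ 2 = ν ^ 2)
    (hw : ∀ j : Fin 3, ∑ i : Fin 3, m j i * g i = ν * p j)
    (hL : L ≤ 3 * K) :
    ((∑ i : Fin 3, (p i) ^ 2) + ν * L - ∑ i : Fin 3, ∑ j : Fin 3, (m i j) ^ 2) / (2 * ν ^ 4)
      - (∑ i : Fin 3, m i i) * (∑ i : Fin 3, p i * g i) / ν ^ 5 ≤ 3 * K ^ 2 := by
  have hν0 : (0:ℝ) < ν := lt_of_lt_of_le one_pos hν1
  have hg3 : (g 0) ^ 2 + (g 1) ^ 2 + (g 2) ^ 2 = ν ^ 2 := by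
    simpa [Fin.sum_univ_three] using hg
  have hw0 : m 0 0 * g 0 + m 0 1 * g 1 + m 0 2 * g 2 = ν * p 0 := by
    simpa [Fin.sum_univ_three] using hw 0
  have hw1 : m 0 1 * g 0 + m 1 1 * g 1 + m 1 2 * g 2 = ν * p 1 := by
    have h := hw 1
    simp only [Fin.sum_univ_three] at h
    rwa [hsym 1 0] at h
  have hw2 : m 0 2 * g 0 + m 1 2 * g 1 + m 2 2 * g 2 = ν * p 2 := by
    have h := hw 2
    simp only [Fin.sum_univ_three] at h
    rwa [hsym 2 0, hsym 2 1] at h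
  have hN : (0:ℝ) < (g 0) ^ 2 + (g 1) ^ 2 + (g 2) ^ 2 := by rw [hg3]; positivity
  have hsos0 := sos (m 0 0) (m 0 1) (m 0 2) (m 1 1) (m 1 2) (m 2 2) (g 0) (g 1) (g 2) hN
  rw [hg3, hw0, hw1, hw2] at hsos0
  apply key K ν (∑ i : Fin 3, m i i) L (∑ i : Fin 3, p i * g i) (∑ i : Fin 3, (p i) ^ 2)
    (∑ i : Fin 3, ∑ j : Fin 3, (m i j) ^ 2) hν1 hνK ?_ ?_ hL
  · simp only [Fin.sum_univ_three]
    rw [hsym 1 0, hsym 2 0, hsym 2 1]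
    refine le_trans (le_of_eq ?_) (le_trans hsos0 (le_of_eq ?_)) <;> ring
  · simp only [Fin.sum_univ_three]
    nlinarith [sq_nonneg (p 0 * g 1 - p 1 * g 0), sq_nonneg (p 0 * g 2 - p 2 * g 0),
      sq_nonneg (p 1 * g 2 - p 2 * g 1), hg3, sq_nonneg (p 0 ^ 2 + p 1 ^ 2 + p 2 ^ 2)]

theorem stmt3
    (n₀ n₀₀ : ℝ) (hn₀ : 1 < n₀) (hn₀n₀₀ : n₀ < n₀₀)
    (n : (Fin 3 → ℝ) → ℝ) (hn : ContDiff ℝ 2 n)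
    (hn1 : ∀ x, 1 ≤ n x) (hn2 : ∀ x, n x ≤ n₀)
    (hb0 : ∀ x, |n x| ≤ n₀₀)
    (hb1 : ∀ x, ∀ i : Fin 3, |pd i n x| ≤ n₀₀)
    (hb2 : ∀ x, ∀ i j : Fin 3, |pd i (pd j n) x| ≤ n₀₀)
    (U : Set (Fin 3 → ℝ)) (hU : IsOpen U)
    (τ : (Fin 3 → ℝ) → ℝ) (hτ : ContDiffOn ℝ 3 τ U)
    (heik : ∀ x ∈ U, ∑ i : Fin 3, (pd i τ x) ^ 2 = (n x) ^ 2)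
    (s₀ : ℝ) (hs₀ : 0 ≤ s₀) (γ : ℝ → (Fin 3 → ℝ))
    (hγU : ∀ s ∈ Icc 0 s₀, γ s ∈ U)
    (hgeo : ∀ s ∈ Icc 0 s₀,
      HasDerivWithinAt γ (fun i => pd i τ (γ s) / (n (γ s)) ^ 2) (Icc 0 s₀) s)
    (hinit : lap τ (γ 0) = 0) :
    ∀ s ∈ Icc 0 s₀, lap τ (γ s) / (2 * n (γ s) ^ 2) ≤ 3 * n₀₀ ^ 2 * s := by

  have hK1 : (1:ℝ) ≤ n₀₀ := by linarith
  set F : ℝ → ℝ := fun t => lap τ (γ t) / (2 * n (γ t) ^ 2) with hF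
  set Φ : ℝ → ℝ := fun t =>
    ((∑ i : Fin 3, pd i τ (γ t) / n (γ t) ^ 2 * pd i (lap τ) (γ t)) * (2 * n (γ t) ^ 2)
      - lap τ (γ t) * (2 * ∑ i : Fin 3, pd i τ (γ t) / n (γ t) ^ 2
          * pd i (fun y => n y ^ 2) (γ t)))
      / (2 * n (γ t) ^ 2) ^ 2 with hΦ
  have hder : ∀ t ∈ Icc 0 s₀, HasDerivWithinAt F (Φ t) (Icc 0 s₀) t := by
    intro t ht
    have hx : γ t ∈ U := hγU t ht
    have hτ3 : ContDiffAt ℝ 3 τ (γ t) := hτ.contDiffAt (hU.mem_nhds hx)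
    have hlapd : DifferentiableAt ℝ (lap τ) (γ t) :=
      DifferentiableAt.fun_sum (fun i _ => da_pd (cd2_pd hτ3 i) i)
    have hnd : DifferentiableAt ℝ (fun y => n y ^ 2) (γ t) :=
      ((hn.differentiable two_ne_zero) (γ t)).pow 2
    have hA := hasDerivWithinAt_comp_pd hlapd (hgeo t ht)
    have hB := (hasDerivWithinAt_comp_pd hnd (hgeo t ht)).const_mul 2
    have hne : 2 * n (γ t) ^ 2 ≠ 0 := by nlinarith [hn1 (γ t)]
    exact hA.div hB hne
  have hΦle : ∀ t ∈ Icc 0 s₀, Φ t ≤ 3 * n₀₀ ^ 2 := by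
    intro t ht
    have hx : γ t ∈ U := hγU t ht
    have hτ3 : ContDiffAt ℝ 3 τ (γ t) := hτ.contDiffAt (hU.mem_nhds hx)
    have hτ2 : ContDiffAt ℝ 2 τ (γ t) := hτ3.of_le (by norm_num)
    have hν1 : 1 ≤ n (γ t) := hn1 _
    have hν0 : (0:ℝ) < n (γ t) := lt_of_lt_of_le one_pos hν1
    have hνK : n (γ t) ≤ n₀₀ := le_trans (hn2 _) (le_of_lt hn₀n₀₀)
    have hsym : ∀ i j : Fin 3, pd i (pd j τ) (γ t) = pd j (pd i τ) (γ t) :=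
      fun i j => pd_comm hτ2 i j
    have hgs : ∑ i : Fin 3, (pd i τ (γ t)) ^ 2 = (n (γ t)) ^ 2 := heik _ hx
    have hwj : ∀ j : Fin 3, ∑ i : Fin 3, pd j (pd i τ) (γ t) * pd i τ (γ t)
        = n (γ t) * pd j n (γ t) := by
      intro j
      have h := part1 hU hn hτ heik _ hx j
      rw [← h]
      exact Finset.sum_congr rfl (fun i _ => by ring)
    have hL3 : ∑ j : Fin 3, pd j (pd j n) (γ t) ≤ 3 * n₀₀ := by
      have h0 := abs_le.mp (hb2 (γ t) 0 0)
      have h1 := abs_le.mp (hb2 (γ t) 1 1)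
      have h2 := abs_le.mp (hb2 (γ t) 2 2)
      simp only [Fin.sum_univ_three]
      linarith [h0.2, h1.2, h2.2]
    have hpoint : ((∑ i : Fin 3, (pd i n (γ t)) ^ 2)
        + n (γ t) * (∑ j : Fin 3, pd j (pd j n) (γ t))
        - ∑ i : Fin 3, ∑ j : Fin 3, (pd i (pd j τ) (γ t)) ^ 2) / (2 * n (γ t) ^ 4)
        - (∑ i : Fin 3, pd i (pd i τ) (γ t))
          * (∑ i : Fin 3, pd i n (γ t) * pd i τ (γ t)) / n (γ t) ^ 5
        ≤ 3 * n₀₀ ^ 2 :=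
      pointwise n₀₀ (n (γ t)) (∑ j : Fin 3, pd j (pd j n) (γ t))
        (fun i j => pd i (pd j τ) (γ t)) (fun i => pd i τ (γ t)) (fun i => pd i n (γ t))
        hsym hν1 hνK hgs hwj hL3
    have hpart2 := part2 hU hn hτ heik _ hx
    have hsum1 : ∑ i : Fin 3, pd i τ (γ t) / n (γ t) ^ 2 * pd i (lap τ) (γ t)
        = ((∑ j : Fin 3, (pd j n (γ t)) ^ 2)
            + n (γ t) * (∑ j : Fin 3, pd j (pd j n) (γ t))
            - ∑ a : Fin 3, ∑ b : Fin 3, (pd a (pd b τ) (γ t)) ^ 2) / n (γ t) ^ 2 := by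
      have e1 : ∑ i : Fin 3, pd i τ (γ t) / n (γ t) ^ 2 * pd i (lap τ) (γ t)
          = (∑ i : Fin 3, pd i τ (γ t) * pd i (lap τ) (γ t)) / n (γ t) ^ 2 := by
        rw [Finset.sum_div]
        exact Finset.sum_congr rfl (fun i _ => by ring)
      rw [e1]
      congr 1
      linarith [hpart2]
    have hpdn2 : ∀ k : Fin 3, pd k (fun y => n y ^ 2) (γ t) = 2 * n (γ t) * pd k n (γ t) :=
      fun k => pd_sq ((hn.differentiable two_ne_zero) (γ t)) k
    have hsum2 : ∑ i : Fin 3, pd i τ (γ t) / n (γ t) ^ 2 * pd i (fun y => n y ^ 2) (γ t)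
        = 2 * (∑ i : Fin 3, pd i n (γ t) * pd i τ (γ t)) / n (γ t) := by
      have e2 : ∀ i : Fin 3, pd i τ (γ t) / n (γ t) ^ 2 * pd i (fun y => n y ^ 2) (γ t)
          = 2 * (pd i n (γ t) * pd i τ (γ t)) / n (γ t) := by
        intro i
        rw [hpdn2 i]
        field_simp
      rw [Finset.sum_congr rfl (fun i _ => e2 i), ← Finset.sum_div, ← Finset.mul_sum]
    have hlapeq : lap τ (γ t) = ∑ i : Fin 3, pd i (pd i τ) (γ t) := rfl
    simp only [hΦ]
    rw [hsum1, hsum2, hlapeq]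
    have hne : n (γ t) ≠ 0 := ne_of_gt hν0
    have heq : (((∑ j : Fin 3, (pd j n (γ t)) ^ 2)
            + n (γ t) * (∑ j : Fin 3, pd j (pd j n) (γ t))
            - ∑ a : Fin 3, ∑ b : Fin 3, (pd a (pd b τ) (γ t)) ^ 2) / n (γ t) ^ 2
          * (2 * n (γ t) ^ 2)
        - (∑ i : Fin 3, pd i (pd i τ) (γ t))
          * (2 * (2 * (∑ i : Fin 3, pd i n (γ t) * pd i τ (γ t)) / n (γ t))))
        / (2 * n (γ t) ^ 2) ^ 2
        = ((∑ i : Fin 3, (pd i n (γ t)) ^ 2)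
            + n (γ t) * (∑ j : Fin 3, pd j (pd j n) (γ t))
            - ∑ i : Fin 3, ∑ j : Fin 3, (pd i (pd j τ) (γ t)) ^ 2) / (2 * n (γ t) ^ 4)
          - (∑ i : Fin 3, pd i (pd i τ) (γ t))
            * (∑ i : Fin 3, pd i n (γ t) * pd i τ (γ t)) / n (γ t) ^ 5 := by
      field_simp
    rw [heq]
    exact hpoint
  have hcont : ContinuousOn F (Icc 0 s₀) := fun t ht => (hder t ht).continuousWithinAt
  have hmono : MonotoneOn (fun t => 3 * n₀₀ ^ 2 * t - F t) (Icc 0 s₀) := by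
    apply monotoneOn_of_hasDerivWithinAt_nonneg (convex_Icc 0 s₀)
      (f' := fun t => 3 * n₀₀ ^ 2 * 1 - Φ t)
      (((continuous_const.mul continuous_id).continuousOn).sub hcont)
    · intro t ht
      exact ((hasDerivWithinAt_id t _).const_mul (3 * n₀₀ ^ 2)).sub
        ((hder t (interior_subset ht)).mono interior_subset)
    · intro t ht
      have := hΦle t (interior_subset ht)
      linarith
  intro s hs
  have h0 : (0:ℝ) ∈ Icc 0 s₀ := ⟨le_refl 0, hs₀⟩
  have hms : 3 * n₀₀ ^ 2 * 0 - F 0 ≤ 3 * n₀₀ ^ 2 * s - F s := hmono h0 hs hs.1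
  have hF0 : F 0 = 0 := by
    simp only [hF]
    rw [hinit]
    simp
  have hFs : F s = lap τ (γ s) / (2 * n (γ s) ^ 2) := rfl
  rw [← hFs]
  linarith [hms, hF0]
end

section
/- Let n : ℝ³ → ℝ be C¹ and let τ be C² on an open set U ⊆ ℝ³ containing a point (x,y,0), with |∇τ|² = n² on U. Assume τ(x',y',0) = 0 for every point (x',y',0) ∈ U of the plane {z = 0}, that ∂_zτ(x,y,0) = 1, and that ∂_z n(x,y,0) = 0. Then Δτ(x,y,0) = 0. (Equality (6.160) in the proof of Theorem 3.1.) -/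
/- STATEMENT 5 (equality (6.160) in the proof of Theorem 3.1):
   if τ = 0 on the plane {z = 0}, ∂_zτ = 1 there and ∂_z n = 0 there,
   then Δτ = 0 on the plane {z = 0}. -/

open Real Set

lemma pd_plane_zero (f : (Fin 3 → ℝ) → ℝ) (U : Set (Fin 3 → ℝ)) (hU : IsOpen U)
    (q : Fin 3 → ℝ) (hq : q ∈ U) (hqz : q 2 = 0)
    (hdf : DifferentiableAt ℝ f q)
    (h0 : ∀ x ∈ U, x 2 = 0 → f x = 0)
    (i : Fin 3) (hi : i ≠ 2) : pd i f q = 0 := by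
  set v : Fin 3 → ℝ := Pi.single i 1 with hv
  have hc : HasDerivAt (fun t : ℝ => q + t • v) v 0 := by
    simpa using ((hasDerivAt_id (0:ℝ)).smul_const v).const_add q
  have hg : HasDerivAt (fun t : ℝ => f (q + t • v)) (fderiv ℝ f q v) 0 := by
    have hfd : HasFDerivAt f (fderiv ℝ f q) ((fun t : ℝ => q + t • v) 0) := by
      simpa using hdf.hasFDerivAt
    exact hfd.comp_hasDerivAt 0 hc
  have hcont : Continuous fun t : ℝ => q + t • v := by continuity
  have hmem : ∀ᶠ t in nhds (0:ℝ), q + t • v ∈ U := by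
    have : q + (0:ℝ) • v ∈ U := by simpa using hq
    exact hcont.continuousAt.preimage_mem_nhds (hU.mem_nhds this)
  have hev : (fun _ : ℝ => (0:ℝ)) =ᶠ[nhds (0:ℝ)] fun t => f (q + t • v) := by
    filter_upwards [hmem] with t ht
    have hz : (q + t • v) 2 = 0 := by
      have : v 2 = 0 := by simp [hv, Pi.single_eq_of_ne (Ne.symm hi)]
      simp [this, hqz]
    exact (h0 _ ht hz).symm
  have h0' : HasDerivAt (fun _ : ℝ => (0:ℝ)) (fderiv ℝ f q v) 0 :=
    hg.congr_of_eventuallyEq hev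
  have := h0'.unique (hasDerivAt_const 0 0)
  simpa [pd] using this

lemma pd_contDiffOn (f : (Fin 3 → ℝ) → ℝ) (U : Set (Fin 3 → ℝ)) (hU : IsOpen U)
    (hf : ContDiffOn ℝ 2 f U) (i : Fin 3) : ContDiffOn ℝ 1 (pd i f) U := by
  have h1 : ContDiffOn ℝ 1 (fun x => fderiv ℝ f x) U :=
    hf.fderiv_of_isOpen hU (by norm_num)
  exact h1.clm_apply contDiffOn_const

theorem stmt5
    (n : (Fin 3 → ℝ) → ℝ) (hn : ContDiff ℝ 1 n)
    (U : Set (Fin 3 → ℝ)) (hU : IsOpen U)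
    (τ : (Fin 3 → ℝ) → ℝ) (hτ : ContDiffOn ℝ 2 τ U)
    (p : Fin 3 → ℝ) (hp : p ∈ U) (hpz : p 2 = 0)
    (heik : ∀ x ∈ U, ∑ i : Fin 3, (pd i τ x) ^ 2 = (n x) ^ 2)
    (hτ0 : ∀ q ∈ U, q 2 = 0 → τ q = 0)
    (hτz : pd 2 τ p = 1)
    (hnz : pd 2 n p = 0) :
    lap τ p = 0 := by
  have hτdiff : ∀ x ∈ U, DifferentiableAt ℝ τ x := fun x hx =>
    (hτ.differentiableOn (by norm_num)).differentiableAt (hU.mem_nhds hx)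
  have hpdC : ∀ i, ContDiffOn ℝ 1 (pd i τ) U := pd_contDiffOn τ U hU hτ
  have hpddiff : ∀ i, ∀ x ∈ U, DifferentiableAt ℝ (pd i τ) x := fun i x hx =>
    ((hpdC i).differentiableOn one_ne_zero).differentiableAt (hU.mem_nhds hx)
  have hpd01 : ∀ i : Fin 3, i ≠ 2 → ∀ q ∈ U, q 2 = 0 → pd i τ q = 0 := fun i hi q hq hqz =>
    pd_plane_zero τ U hU q hq hqz (hτdiff q hq) hτ0 i hi
  have h0p : pd 0 τ p = 0 := hpd01 0 (by decide) p hp hpz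
  have h1p : pd 1 τ p = 0 := hpd01 1 (by decide) p hp hpz
  have hA0 : pd 0 (pd 0 τ) p = 0 :=
    pd_plane_zero (pd 0 τ) U hU p hp hpz (hpddiff 0 p hp) (hpd01 0 (by decide)) 0 (by decide)
  have hA1 : pd 1 (pd 1 τ) p = 0 :=
    pd_plane_zero (pd 1 τ) U hU p hp hpz (hpddiff 1 p hp) (hpd01 1 (by decide)) 1 (by decide)
  -- differentiate the eikonal equation
  have hsq : ∀ i : Fin 3, HasFDerivAt (fun x => (pd i τ x) ^ 2)
      ((2 * pd i τ p) • fderiv ℝ (pd i τ) p) p := by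
    intro i
    have h := (hpddiff i p hp).hasFDerivAt
    have hm := h.mul h
    have : (2 * pd i τ p) • fderiv ℝ (pd i τ) p
        = pd i τ p • fderiv ℝ (pd i τ) p + pd i τ p • fderiv ℝ (pd i τ) p := by
      rw [two_mul, add_smul]
    rw [this]
    have hfun : (fun x => (pd i τ x) ^ 2) = pd i τ * pd i τ := by funext x; simp [pow_two]
    rw [hfun]; exact hm
  have hF : HasFDerivAt (fun x => ∑ i : Fin 3, (pd i τ x) ^ 2)
      (∑ i : Fin 3, (2 * pd i τ p) • fderiv ℝ (pd i τ) p) p :=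
    HasFDerivAt.fun_sum (fun i _ => hsq i)
  have hnd := (hn.differentiable one_ne_zero p).hasFDerivAt
  have hG : HasFDerivAt (fun x => (n x) ^ 2) ((2 * n p) • fderiv ℝ n p) p := by
    have hm := hnd.mul hnd
    have : (2 * n p) • fderiv ℝ n p = n p • fderiv ℝ n p + n p • fderiv ℝ n p := by
      rw [two_mul, add_smul]
    rw [this]
    have hfun : (fun x => (n x) ^ 2) = n * n := by funext x; simp [pow_two]
    rw [hfun]; exact hm
  have hev : (fun x => ∑ i : Fin 3, (pd i τ x) ^ 2) =ᶠ[nhds p] fun x => (n x) ^ 2 :=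
    Filter.eventuallyEq_of_mem (hU.mem_nhds hp) heik
  have hF' : HasFDerivAt (fun x => (n x) ^ 2)
      (∑ i : Fin 3, (2 * pd i τ p) • fderiv ℝ (pd i τ) p) p :=
    hF.congr_of_eventuallyEq hev.symm
  have heq := hF'.unique hG
  have hval := DFunLike.congr_fun heq (Pi.single 2 (1:ℝ))
  simp only [Fin.sum_univ_three, ContinuousLinearMap.add_apply,
    ContinuousLinearMap.smul_apply, smul_eq_mul] at hval
  have hval' : 2 * pd 2 (pd 2 τ) p = 0 := by
    simp only [show ∀ i : Fin 3, fderiv ℝ (pd i τ) p (Pi.single 2 1) = pd 2 (pd i τ) p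
        from fun _ => rfl,
      show fderiv ℝ n p (Pi.single 2 1) = pd 2 n p from rfl] at hval
    rw [h0p, h1p, hτz, hnz] at hval
    linarith
  have hA2 : pd 2 (pd 2 τ) p = 0 := by linarith
  simp [lap, Fin.sum_univ_three, hA0, hA1, hA2]
end
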